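/- Let λ̃ be the quasi-strategy of Adam defined by the fixpoint W = μX.(U^a ∪ upre_over(X)) in a conservative abstraction, and let upre_{γ(λ̃)}(S) = { q | ∃σ_u ∈ γ(λ̃)(q), ∀σ_c, δ(q,σ_u,σ_c) ∈ S } be the concrete uncontrollable predecessor restricted to the concretized quasi-strategy. Then q_I ∉ μX.(U ∪ upre_{γ(λ̃)}(X)) if and only if q_I ∉ μX.(U ∪ upre(X)). -/
import Mathlib


/-- Abstract transition relation: existential lift of the concrete transition function. -/
def absDelta {Q Au Ac : Type*} (δ : Q → Au → Ac → Q) (P : Set (Set Q))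
    (s : Set Q) (σu : Au) (σc : Ac) (s' : Set Q) : Prop :=
  s ∈ P ∧ s' ∈ P ∧ ∃ q ∈ s, δ q σu σc ∈ s'

/-- Concrete uncontrollable predecessors. -/
def upre {Q Au Ac : Type*} (δ : Q → Au → Ac → Q) (S : Set Q) : Set Q :=
  {q | ∃ σu : Au, ∀ σc : Ac, δ q σu σc ∈ S}

/-- Over-approximating abstract uncontrollable predecessors. -/
def upreOver {Q Au Ac : Type*} (δ : Q → Au → Ac → Q) (P : Set (Set Q))
    (Sa : Set (Set Q)) : Set (Set Q) :=
  {qa ∈ P | ∃ σu : Au, ∀ σc : Ac, ∃ ra ∈ Sa, absDelta δ P qa σu σc ra}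

/-- Least fixpoint of a set operator (intersection of prefixed points). -/
def lfpSet {α : Type*} (F : Set α → Set α) : Set α := ⋂₀ {X | F X ⊆ X}

lemma lfpSet_le {α : Type*} {F : Set α → Set α} {X : Set α} (hX : F X ⊆ X) :
    lfpSet F ⊆ X := Set.sInter_subset_of_mem hX

lemma lfpSet_pre {α : Type*} {F : Set α → Set α}
    (hmono : ∀ ⦃A B : Set α⦄, A ⊆ B → F A ⊆ F B) :
    F (lfpSet F) ⊆ lfpSet F := by
  intro a ha
  intro X hX
  exact hX (hmono (lfpSet_le hX) ha)

lemma lfpSet_mono_op {α : Type*} {F G : Set α → Set α}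
    (h : ∀ X, F X ⊆ G X) : lfpSet F ⊆ lfpSet G := by
  intro a ha X hX
  exact ha X (fun y hy => hX (h X hy))

theorem stmt_8 {Q Au Ac : Type*} [Fintype Q] [Fintype Au] [Fintype Ac]
    (δ : Q → Au → Ac → Q) (qI : Q) (U : Set Q)
    (P : Set (Set Q)) (hP : Setoid.IsPartition P)
    (Ua : Set (Set Q)) (hUa : Ua ⊆ P) (hU : U ⊆ ⋃₀ Ua)
    (W : Set (Set Q)) (hW : W = lfpSet (fun X => Ua ∪ upreOver δ P X))
    -- λ̃ is the quasi-strategy of Adam defined by W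
    (lamTilde : Set Q → Set Au)
    (hlam : ∀ qa, lamTilde qa = {σu | ∀ σc : Ac, ∃ s ∈ W, absDelta δ P qa σu σc s})
    -- concrete upre restricted to the concretization γ(λ̃)
    (upreRes : Set Q → Set Q)
    (hres : ∀ S, upreRes S =
      {q | ∃ σu : Au, (∃ b ∈ P, q ∈ b ∧ σu ∈ lamTilde b) ∧ ∀ σc : Ac, δ q σu σc ∈ S}) :
    qI ∉ lfpSet (fun X => U ∪ upreRes X) ↔ qI ∉ lfpSet (fun X => U ∪ upre δ X) := by
  -- monotonicity facts
  have hmonoRes : ∀ ⦃A B : Set Q⦄, A ⊆ B →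
      (fun X => U ∪ upreRes X) A ⊆ (fun X => U ∪ upreRes X) B := by
    intro A B hAB q hq
    rcases hq with hq | hq
    · exact Or.inl hq
    · rw [hres] at hq
      refine Or.inr ?_
      rw [hres]
      obtain ⟨σu, hb, hδ⟩ := hq
      exact ⟨σu, hb, fun σc => hAB (hδ σc)⟩
  have hmonoOver : ∀ ⦃A B : Set (Set Q)⦄, A ⊆ B →
      (fun X => Ua ∪ upreOver δ P X) A ⊆ (fun X => Ua ∪ upreOver δ P X) B := by
    intro A B hAB s hs
    rcases hs with hs | hs
    · exact Or.inl hs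
    · obtain ⟨hsP, σu, h⟩ := hs
      refine Or.inr ⟨hsP, σu, fun σc => ?_⟩
      obtain ⟨ra, hra, habs⟩ := h σc
      exact ⟨ra, hAB hra, habs⟩
  -- W is a prefixed point of its operator
  have hWpre : Ua ∪ upreOver δ P W ⊆ W := by
    rw [hW]; exact lfpSet_pre hmonoOver
  -- the concretization of W
  set γW : Set Q := {q | ∃ b ∈ P, q ∈ b ∧ b ∈ W} with hγW
  -- the concrete winning set is contained in γW
  have hL : lfpSet (fun X => U ∪ upre δ X) ⊆ γW := by
    apply lfpSet_le
    intro q hq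
    rcases hq with hq | hq
    · obtain ⟨ua, hua, hqua⟩ := hU hq
      exact ⟨ua, hUa hua, hqua, hWpre (Or.inl hua)⟩
    · obtain ⟨σu, hσu⟩ := hq
      obtain ⟨b, ⟨hbP, hqb⟩, -⟩ := hP.2 q
      refine ⟨b, hbP, hqb, hWpre (Or.inr ⟨hbP, σu, fun σc => ?_⟩)⟩
      obtain ⟨b', hb'P, hδb', hb'W⟩ := hσu σc
      exact ⟨b', hb'W, hbP, hb'P, q, hqb, hδb'⟩
  -- the two fixpoints are equal
  have hEq : lfpSet (fun X => U ∪ upreRes X) = lfpSet (fun X => U ∪ upre δ X) := by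
    apply Set.Subset.antisymm
    · apply lfpSet_mono_op
      intro X q hq
      rcases hq with hq | hq
      · exact Or.inl hq
      · rw [hres] at hq
        obtain ⟨σu, -, hδ⟩ := hq
        exact Or.inr ⟨σu, hδ⟩
    · -- lfp(U ∪ upreRes) is a prefixed point of U ∪ upre
      apply lfpSet_le
      intro q hq
      have hsub : lfpSet (fun X => U ∪ upreRes X) ⊆ lfpSet (fun X => U ∪ upre δ X) := by
        apply lfpSet_mono_op
        intro X q hq
        rcases hq with hq | hq
        · exact Or.inl hq
        · rw [hres] at hq
          obtain ⟨σu, -, hδ⟩ := hq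
          exact Or.inr ⟨σu, hδ⟩
      rcases hq with hq | hq
      · exact lfpSet_pre hmonoRes (Or.inl hq)
      · obtain ⟨σu, hσu⟩ := hq
        obtain ⟨b, ⟨hbP, hqb⟩, -⟩ := hP.2 q
        apply lfpSet_pre hmonoRes
        refine Or.inr ?_
        rw [hres]
        refine ⟨σu, ⟨b, hbP, hqb, ?_⟩, hσu⟩
        rw [hlam]
        intro σc
        obtain ⟨b', hb'P, hδb', hb'W⟩ := hL (hsub (hσu σc))
        exact ⟨b', hb'W, hbP, hb'P, q, hqb, hδb'⟩
  rw [hEq]
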